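/- (Entanglement rate bound for Tsallis entropy, q ≥ 2, commutator form.) Let q ≥ 2 and let d ≥ 2 be an integer satisfying d^(−2(q−1)) < q − √(q² − 1). Let n ≥ 1 and let X, Y be n×n complex matrices with 0 ≤ X ≤ Y ≤ I, Tr X = 1/d², and Tr Y = 1. Then (q/(q−1)) · d^(q+1) · ‖[X, Y^(q−1)]‖₁ ≤ 9 · (q/(q−1)) · (d^(q−1) − d^(1−q)). -/

import Mathlib

open scoped ComplexOrder

/-- The trace norm of a complex matrix: `Tr √(Aᴴ A)`, the sum of singular values. -/
noncomputable def traceNorm {n : ℕ} (A : Matrix (Fin n) (Fin n) ℂ) : ℝ :=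
  (((Matrix.posSemidef_conjTranspose_mul_self A).1.eigenvectorUnitary : Matrix (Fin n) (Fin n) ℂ) *
    Matrix.diagonal (fun i => ((Real.sqrt ((Matrix.posSemidef_conjTranspose_mul_self A).1.eigenvalues i) : ℝ) : ℂ)) *
    (star (Matrix.posSemidef_conjTranspose_mul_self A).1.eigenvectorUnitary :
      Matrix (Fin n) (Fin n) ℂ)).trace.re

/-- For a Hermitian matrix `Y = Σⱼ yⱼ |φⱼ⟩⟨φⱼ|`, the matrix `f(Y) = Σⱼ f(yⱼ) |φⱼ⟩⟨φⱼ|`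
(junk value `0` if `Y` is not Hermitian). -/
noncomputable def matFun {n : ℕ} (f : ℝ → ℝ) (Y : Matrix (Fin n) (Fin n) ℂ) :
    Matrix (Fin n) (Fin n) ℂ :=
  if hY : Y.IsHermitian then
    (hY.eigenvectorUnitary : Matrix (Fin n) (Fin n) ℂ) *
      Matrix.diagonal (fun i => (f (hY.eigenvalues i) : ℂ)) *
      (star hY.eigenvectorUnitary : Matrix (Fin n) (Fin n) ℂ)
  else 0

namespace TsallisAux

open Matrix

variable {n : ℕ}

noncomputable def ee (x : Fin n → ℂ) : EuclideanSpace ℂ (Fin n) := (WithLp.equiv 2 _).symm x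

lemma dot_eq_inner (x y : Fin n → ℂ) : star x ⬝ᵥ y = (inner ℂ (ee x) (ee y) : ℂ) := by
  rw [dotProduct_comm]; rfl

lemma dot_self_re (x : Fin n → ℂ) : (star x ⬝ᵥ x).re = ‖ee x‖ ^ 2 := by
  rw [dot_eq_inner, inner_self_eq_norm_sq_to_K (𝕜 := ℂ)]
  simp [← Complex.ofReal_pow]

lemma norm_dot_le (x y : Fin n → ℂ) : ‖star x ⬝ᵥ y‖ ≤ ‖ee x‖ * ‖ee y‖ := by
  rw [dot_eq_inner]; exact norm_inner_le_norm _ _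

lemma conj_dot (B : Matrix (Fin n) (Fin n) ℂ) (u : Fin n → ℂ) :
    star (star u ⬝ᵥ (B *ᵥ u)) = star u ⬝ᵥ (Bᴴ *ᵥ u) := by
  rw [star_dotProduct, star_star, star_mulVec, ← dotProduct_mulVec]

lemma quad_re_le (V : Matrix (Fin n) (Fin n) ℂ) (hV : V ∈ Matrix.unitaryGroup (Fin n) ℂ)
    (c : Fin n → ℝ) (h0 : ∀ i, 0 ≤ c i) (h1 : ∀ i, c i ≤ 1) (x : Fin n → ℂ) :
    (star x ⬝ᵥ ((V * Matrix.diagonal (fun i => (c i : ℂ)) * star V) *ᵥ x)).re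
      ≤ (star x ⬝ᵥ x).re := by
  set D : Matrix (Fin n) (Fin n) ℂ := Matrix.diagonal (fun i => (c i : ℂ)) with hD
  set y := star V *ᵥ x with hy
  have hstar : star y = star x ᵥ* V := by
    rw [hy, star_mulVec]; simp [star_eq_conjTranspose]
  have e2 : star x ⬝ᵥ ((V * D * star V) *ᵥ x) = star y ⬝ᵥ (D *ᵥ y) := by
    rw [← mulVec_mulVec, ← mulVec_mulVec, dotProduct_mulVec, ← hstar]
  have hVV : V * Vᴴ = 1 := by
    rw [← star_eq_conjTranspose]; exact Matrix.mem_unitaryGroup_iff.mp hV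
  have e3 : star y ⬝ᵥ y = star x ⬝ᵥ x := by
    rw [hy]
    conv_lhs => rw [star_mulVec, dotProduct_mulVec, vecMul_vecMul]
    simp [star_eq_conjTranspose, hVV]
  rw [e2, ← e3]
  have hterm : ∀ i, (star (y i) * ((c i : ℂ) * y i)).re = c i * Complex.normSq (y i) := by
    intro i
    rw [show star (y i) * ((c i : ℂ) * y i) = (c i : ℂ) * ((starRingEnd ℂ) (y i) * y i) by
      simp [Complex.star_def]; ring]
    rw [← Complex.normSq_eq_conj_mul_self, ← Complex.ofReal_mul, Complex.ofReal_re]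
  have hterm2 : ∀ i, (star (y i) * y i).re = Complex.normSq (y i) := by
    intro i
    rw [show star (y i) * y i = (starRingEnd ℂ) (y i) * y i by simp [Complex.star_def]]
    rw [← Complex.normSq_eq_conj_mul_self, Complex.ofReal_re]
  simp only [hD, dotProduct, mulVec_diagonal, Pi.star_apply, Complex.re_sum]
  refine Finset.sum_le_sum fun i _ => ?_
  rw [hterm, hterm2]
  have := Complex.normSq_nonneg (y i)
  nlinarith [h0 i, h1 i]

lemma contr_of_gram (W V : Matrix (Fin n) (Fin n) ℂ) (hV : V ∈ Matrix.unitaryGroup (Fin n) ℂ)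
    (c : Fin n → ℝ) (h0 : ∀ i, 0 ≤ c i) (h1 : ∀ i, c i ≤ 1)
    (hW : Wᴴ * W = V * Matrix.diagonal (fun i => (c i : ℂ)) * star V)
    (x : Fin n → ℂ) : ‖ee (W *ᵥ x)‖ ≤ ‖ee x‖ := by
  have h2 : ‖ee (W *ᵥ x)‖ ^ 2 ≤ ‖ee x‖ ^ 2 := by
    rw [← dot_self_re, ← dot_self_re]
    have e : star (W *ᵥ x) ⬝ᵥ (W *ᵥ x) = star x ⬝ᵥ ((Wᴴ * W) *ᵥ x) := by
      rw [star_mulVec, ← mulVec_mulVec, ← dotProduct_mulVec]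
    rw [e, hW]
    exact quad_re_le V hV c h0 h1 x
  calc ‖ee (W *ᵥ x)‖ = √(‖ee (W *ᵥ x)‖ ^ 2) := (Real.sqrt_sq (norm_nonneg _)).symm
    _ ≤ √(‖ee x‖ ^ 2) := Real.sqrt_le_sqrt h2
    _ = ‖ee x‖ := Real.sqrt_sq (norm_nonneg _)

lemma diag_real_herm (c : Fin n → ℝ) :
    (Matrix.diagonal (fun i => (c i : ℂ)))ᴴ = Matrix.diagonal (fun i => (c i : ℂ)) := by
  simp [diagonal_conjTranspose, Pi.star_def, Complex.conj_ofReal]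

lemma conj_diag_herm (V : Matrix (Fin n) (Fin n) ℂ) (c : Fin n → ℝ) :
    (V * Matrix.diagonal (fun i => (c i : ℂ)) * star V).IsHermitian := by
  show _ = _
  calc (V * Matrix.diagonal (fun i => (c i : ℂ)) * star V)ᴴ
      = (star V)ᴴ * ((Matrix.diagonal (fun i => (c i : ℂ)))ᴴ * Vᴴ) := by
        simp [conjTranspose_mul, Matrix.mul_assoc]
    _ = V * Matrix.diagonal (fun i => (c i : ℂ)) * star V := by
        rw [diag_real_herm, star_eq_conjTranspose, conjTranspose_conjTranspose, Matrix.mul_assoc]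

lemma conj_diag_mul (V : Matrix (Fin n) (Fin n) ℂ) (hsVV : star V * V = 1)
    (a b : Fin n → ℂ) :
    (V * Matrix.diagonal a * star V) * (V * Matrix.diagonal b * star V)
      = V * Matrix.diagonal (fun i => a i * b i) * star V := by
  have h : star V * (V * (Matrix.diagonal b * star V)) = Matrix.diagonal b * star V := by
    rw [← Matrix.mul_assoc, hsVV, Matrix.one_mul]
  simp only [Matrix.mul_assoc, h]
  rw [← Matrix.mul_assoc (Matrix.diagonal a), diagonal_mul_diagonal]

lemma trace_conj_unitary {V : Matrix (Fin n) (Fin n) ℂ} (hV : V ∈ Matrix.unitaryGroup (Fin n) ℂ)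
    (D : Matrix (Fin n) (Fin n) ℂ) : (V * D * star V).trace = D.trace := by
  rw [Matrix.trace_mul_cycle, Matrix.mem_unitaryGroup_iff'.mp hV, Matrix.one_mul]

lemma trace_mul_diagonal (N : Matrix (Fin n) (Fin n) ℂ) (w : Fin n → ℂ) :
    (N * Matrix.diagonal w).trace = ∑ i, N i i * w i := by
  simp [Matrix.trace, Matrix.diag, Matrix.mul_diagonal]

lemma entry_eq_dot (P M : Matrix (Fin n) (Fin n) ℂ) (i : Fin n) :
    (star P * M * P) i i = star (fun j => P j i) ⬝ᵥ (M *ᵥ fun j => P j i) := by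
  simp only [star_eq_conjTranspose, Matrix.mul_apply, Matrix.mulVec, dotProduct,
    Matrix.conjTranspose_apply, Pi.star_apply, Finset.sum_mul, Finset.mul_sum]
  rw [Finset.sum_comm]
  apply Finset.sum_congr rfl
  intro j _
  apply Finset.sum_congr rfl
  intro k _
  ring

/-- The key trace-norm commutator bound: if `X` is PSD and `Z` is a Hermitian contraction,
then `‖[X,Z]‖₁ ≤ 2 Tr X`. -/
lemma key (X Z : Matrix (Fin n) (Fin n) ℂ) (hX : X.PosSemidef) (hZH : Z.IsHermitian)
    (hZc : ∀ x, ‖ee (Z *ᵥ x)‖ ≤ ‖ee x‖) :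
    traceNorm (X * Z - Z * X) ≤ 2 * X.trace.re := by
  set A := X * Z - Z * X with hA
  have hH : (Aᴴ * A).PosSemidef := Matrix.posSemidef_conjTranspose_mul_self A
  set μ : Fin n → ℝ := hH.1.eigenvalues with hμdef
  set V : Matrix (Fin n) (Fin n) ℂ := (hH.1.eigenvectorUnitary : Matrix (Fin n) (Fin n) ℂ) with hVdef
  have hVU : V ∈ Matrix.unitaryGroup (Fin n) ℂ := hH.1.eigenvectorUnitary.2
  have hsVV : star V * V = 1 := Matrix.mem_unitaryGroup_iff'.mp hVU
  have spec : Aᴴ * A = V * Matrix.diagonal (fun i => (μ i : ℂ)) * star V :=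
    hH.1.spectral_theorem
  have hμ0 : ∀ i, 0 ≤ μ i := hH.eigenvalues_nonneg
  set g : Fin n → ℝ := fun i => if μ i = 0 then 0 else (Real.sqrt (μ i))⁻¹ with hg
  set ind : Fin n → ℝ := fun i => if μ i = 0 then 0 else 1 with hind
  set C : Matrix (Fin n) (Fin n) ℂ := V * Matrix.diagonal (fun i => (g i : ℂ)) * star V
    with hC
  set W : Matrix (Fin n) (Fin n) ℂ := A * C with hW
  have hCH : Cᴴ = C := conj_diag_herm V g
  have hWct : Wᴴ = C * Aᴴ := by rw [hW, conjTranspose_mul, hCH]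
  have hr : ∀ i, g i * μ i * g i = ind i := by
    intro i
    by_cases h : μ i = 0
    · simp [hg, hind, h]
    · have hs : Real.sqrt (μ i) ≠ 0 := by
        have hpos : 0 < μ i := lt_of_le_of_ne (hμ0 i) (Ne.symm h)
        positivity
      simp only [hg, hind, h, if_false]
      rw [show (Real.sqrt (μ i))⁻¹ * μ i * (Real.sqrt (μ i))⁻¹
          = μ i / (Real.sqrt (μ i) * Real.sqrt (μ i)) by ring,
        Real.mul_self_sqrt (hμ0 i), div_self h]
  have hr2 : ∀ i, g i * μ i = Real.sqrt (μ i) := by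
    intro i
    by_cases h : μ i = 0
    · simp [hg, h]
    · have hs : Real.sqrt (μ i) ≠ 0 := by
        have hpos : 0 < μ i := lt_of_le_of_ne (hμ0 i) (Ne.symm h)
        positivity
      simp only [hg, h, if_false]
      rw [show (Real.sqrt (μ i))⁻¹ * μ i = μ i / Real.sqrt (μ i) by ring, Real.div_sqrt]
  have e2 : C * (Aᴴ * A) = V * Matrix.diagonal (fun i => (g i : ℂ) * (μ i : ℂ)) * star V := by
    rw [spec, hC]
    exact conj_diag_mul V hsVV _ _
  -- the Gram matrix of W
  have hgram : Wᴴ * W = V * Matrix.diagonal (fun i => (ind i : ℂ)) * star V := by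
    have e : Wᴴ * W = C * (Aᴴ * A) * C := by
      rw [hWct, hW, Matrix.mul_assoc, ← Matrix.mul_assoc Aᴴ A C, ← Matrix.mul_assoc]
    rw [e, show C * (Aᴴ * A) * C
        = (V * Matrix.diagonal (fun i => (g i : ℂ) * (μ i : ℂ)) * star V) * C from by rw [e2],
      hC, conj_diag_mul V hsVV]
    have hfun : (fun i => ((g i : ℂ) * (μ i : ℂ)) * (g i : ℂ)) = (fun i => ((ind i : ℝ) : ℂ)) := by
      funext i
      exact_mod_cast congrArg (Complex.ofReal) (hr i)
    rw [hfun]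
  have hWcontr : ∀ x, ‖ee (W *ᵥ x)‖ ≤ ‖ee x‖ := by
    intro x
    refine contr_of_gram W V hVU ind ?_ ?_ hgram x
    · intro i; by_cases h : μ i = 0 <;> simp [hind, h]
    · intro i; by_cases h : μ i = 0 <;> simp [hind, h]
  -- trace norm equals sum of square roots of eigenvalues
  -- trace norm equals sum of square roots of eigenvalues
  have step1 : traceNorm A = ∑ i, Real.sqrt (μ i) := by
    have : traceNorm A = ((V * Matrix.diagonal (fun i => ((Real.sqrt (μ i) : ℝ) : ℂ))
        * star V).trace).re := rfl
    rw [this, trace_conj_unitary hVU, Matrix.trace_diagonal, Complex.re_sum]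
    simp
  -- trace of Wᴴ A
  have step2 : (Wᴴ * A).trace = ((∑ i, Real.sqrt (μ i) : ℝ) : ℂ) := by
    have e : Wᴴ * A = C * (Aᴴ * A) := by rw [hWct, Matrix.mul_assoc]
    rw [e, e2, trace_conj_unitary hVU, Matrix.trace_diagonal]
    push_cast
    apply Finset.sum_congr rfl
    intro i _
    exact_mod_cast congrArg (Complex.ofReal) (hr2 i)
  -- move to M X form
  have step3 : (Wᴴ * A).trace = ((Z * Wᴴ - Wᴴ * Z) * X).trace := by
    have c1 : (Wᴴ * (X * Z)).trace = (Z * Wᴴ * X).trace := by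
      rw [Matrix.trace_mul_comm, Matrix.mul_assoc, Matrix.trace_mul_comm]
    have c2 : (Wᴴ * (Z * X)).trace = (Wᴴ * Z * X).trace := by rw [Matrix.mul_assoc]
    rw [hA, Matrix.mul_sub, Matrix.trace_sub, Matrix.sub_mul, Matrix.trace_sub, c1, c2]
  -- per unit vector bound
  have step4 : ∀ u : Fin n → ℂ, ‖ee u‖ ≤ 1 →
      ‖star u ⬝ᵥ ((Z * Wᴴ - Wᴴ * Z) *ᵥ u)‖ ≤ 2 := by
    intro u hu
    rw [sub_mulVec, dotProduct_sub]
    have h1 : ‖star u ⬝ᵥ ((Z * Wᴴ) *ᵥ u)‖ ≤ 1 := by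
      have hc : star (star u ⬝ᵥ ((Z * Wᴴ) *ᵥ u)) = star u ⬝ᵥ ((W * Z) *ᵥ u) := by
        rw [conj_dot]
        congr 2
        rw [conjTranspose_mul, conjTranspose_conjTranspose, hZH.eq]
      have : ‖star u ⬝ᵥ ((Z * Wᴴ) *ᵥ u)‖ = ‖star u ⬝ᵥ ((W * Z) *ᵥ u)‖ := by
        rw [← hc, norm_star]
      rw [this, ← mulVec_mulVec]
      calc ‖star u ⬝ᵥ (W *ᵥ (Z *ᵥ u))‖ ≤ ‖ee u‖ * ‖ee (W *ᵥ (Z *ᵥ u))‖ := norm_dot_le _ _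
        _ ≤ 1 * 1 := by
            apply mul_le_mul hu _ (norm_nonneg _) zero_le_one
            exact le_trans (hWcontr _) (le_trans (hZc u) hu)
        _ = 1 := by norm_num
    have h2 : ‖star u ⬝ᵥ ((Wᴴ * Z) *ᵥ u)‖ ≤ 1 := by
      have e : star u ⬝ᵥ ((Wᴴ * Z) *ᵥ u) = star (W *ᵥ u) ⬝ᵥ (Z *ᵥ u) := by
        rw [← mulVec_mulVec, dotProduct_mulVec, ← star_mulVec]
      rw [e]
      calc ‖star (W *ᵥ u) ⬝ᵥ (Z *ᵥ u)‖ ≤ ‖ee (W *ᵥ u)‖ * ‖ee (Z *ᵥ u)‖ := norm_dot_le _ _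
        _ ≤ 1 * 1 := by
            apply mul_le_mul (le_trans (hWcontr u) hu) (le_trans (hZc u) hu) (norm_nonneg _)
              zero_le_one
        _ = 1 := by norm_num
    calc ‖star u ⬝ᵥ ((Z * Wᴴ) *ᵥ u) - star u ⬝ᵥ ((Wᴴ * Z) *ᵥ u)‖
        ≤ ‖star u ⬝ᵥ ((Z * Wᴴ) *ᵥ u)‖ + ‖star u ⬝ᵥ ((Wᴴ * Z) *ᵥ u)‖ := norm_sub_le _ _
      _ ≤ 2 := by linarith
  -- spectral decomposition of X
  set M : Matrix (Fin n) (Fin n) ℂ := Z * Wᴴ - Wᴴ * Z with hM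
  set lam : Fin n → ℝ := hX.1.eigenvalues with hlam
  set P : Matrix (Fin n) (Fin n) ℂ := (hX.1.eigenvectorUnitary : Matrix (Fin n) (Fin n) ℂ) with hP
  have hPU : P ∈ Matrix.unitaryGroup (Fin n) ℂ := hX.1.eigenvectorUnitary.2
  have hsPP : star P * P = 1 := Matrix.mem_unitaryGroup_iff'.mp hPU
  have specX : X = P * Matrix.diagonal (fun i => (lam i : ℂ)) * star P := hX.1.spectral_theorem
  have hlam0 : ∀ i, 0 ≤ lam i := hX.eigenvalues_nonneg
  have hcol : ∀ i : Fin n, ‖ee (fun j => P j i)‖ ≤ 1 := by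
    intro i
    have h1 : star (fun j => P j i) ⬝ᵥ (fun j => P j i) = (star P * P) i i := by
      simp [Matrix.mul_apply, dotProduct, star_eq_conjTranspose,
        Matrix.conjTranspose_apply]
    have h2 : ((star P * P) i i) = 1 := by rw [hsPP]; simp
    have h3 : ‖ee (fun j => P j i)‖ ^ 2 = 1 := by
      rw [← dot_self_re, h1, h2]; simp
    nlinarith [norm_nonneg (ee (fun j => P j i))]
  have step5 : ((M * X).trace).re ≤ 2 * X.trace.re := by
    have e1 : (M * X).trace = ∑ i, (star P * M * P) i i * (lam i : ℂ) := by
      conv_lhs => rw [specX, ← Matrix.mul_assoc, ← Matrix.mul_assoc]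
      rw [Matrix.trace_mul_comm, ← Matrix.mul_assoc, ← Matrix.mul_assoc, trace_mul_diagonal]
    have e2 : X.trace = ∑ i, ((lam i : ℝ) : ℂ) := by
      conv_lhs => rw [specX]
      rw [trace_conj_unitary hPU, Matrix.trace_diagonal]
    rw [e1, e2, Complex.re_sum, Complex.re_sum]
    have hb : ∀ i, ((star P * M * P) i i * (lam i : ℂ)).re ≤ 2 * lam i := by
      intro i
      have : ((star P * M * P) i i * (lam i : ℂ)).re = ((star P * M * P) i i).re * lam i := by
        rw [Complex.mul_re]; simp
      rw [this]
      have hre : ((star P * M * P) i i).re ≤ 2 := by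
        calc ((star P * M * P) i i).re ≤ ‖(star P * M * P) i i‖ := Complex.re_le_norm _
          _ = ‖star (fun j => P j i) ⬝ᵥ (M *ᵥ fun j => P j i)‖ := by rw [entry_eq_dot]
          _ ≤ 2 := step4 _ (hcol i)
      nlinarith [hlam0 i]
    calc ∑ i, ((star P * M * P) i i * (lam i : ℂ)).re ≤ ∑ i, 2 * lam i :=
        Finset.sum_le_sum fun i _ => hb i
      _ = 2 * ∑ i, ((lam i : ℝ) : ℂ).re := by simp [Finset.mul_sum]
  -- combine
  have final : traceNorm A = ((M * X).trace).re := by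
    rw [step1, ← step3, hM] at *
    rw [step2]
    simp
  rw [final] at *
  exact step5

end TsallisAux

theorem tsallis_entanglement_rate_bound {n : ℕ} (hn : 1 ≤ n) (q : ℝ) (hq : 2 ≤ q)
    (d : ℕ) (hd : 2 ≤ d)
    (hdq : (d : ℝ) ^ (-(2 * (q - 1))) < q - Real.sqrt (q ^ 2 - 1))
    (X Y : Matrix (Fin n) (Fin n) ℂ)
    (hX : X.PosSemidef) (hXY : (Y - X).PosSemidef)
    (hYI : ((1 : Matrix (Fin n) (Fin n) ℂ) - Y).PosSemidef)
    (hTrX : X.trace = 1 / (d : ℂ) ^ 2) (hTrY : Y.trace = 1) :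
    (q / (q - 1)) * (d : ℝ) ^ (q + 1) *
        traceNorm (X * matFun (fun t => t ^ (q - 1)) Y -
          matFun (fun t => t ^ (q - 1)) Y * X) ≤
      9 * (q / (q - 1)) * ((d : ℝ) ^ (q - 1) - (d : ℝ) ^ (1 - q)) := by
  classical
  open Matrix TsallisAux in
  set f : ℝ → ℝ := fun t => t ^ (q - 1) with hf
  have hYpsd : Y.PosSemidef := by
    have h := hX.add hXY
    simpa using h
  have hYH : Y.IsHermitian := hYpsd.1
  set ν : Fin n → ℝ := hYH.eigenvalues with hν
  set VY : Matrix (Fin n) (Fin n) ℂ := (hYH.eigenvectorUnitary : Matrix (Fin n) (Fin n) ℂ)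
    with hVY
  have hVYU : VY ∈ Matrix.unitaryGroup (Fin n) ℂ := hYH.eigenvectorUnitary.2
  have hsVV : star VY * VY = 1 := Matrix.mem_unitaryGroup_iff'.mp hVYU
  have hν0 : ∀ i, 0 ≤ ν i := hYpsd.eigenvalues_nonneg
  have hν1 : ∀ i, ν i ≤ 1 := by
    intro i
    set v : Fin n → ℂ := ⇑(hYH.eigenvectorBasis i) with hv
    have hnv : (star v ⬝ᵥ v).re = 1 := by
      have h1 : ‖TsallisAux.ee v‖ = 1 := hYH.eigenvectorBasis.orthonormal.1 i
      rw [TsallisAux.dot_self_re, h1]; norm_num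
    have h0 : 0 ≤ ((star v ⬝ᵥ (((1 : Matrix (Fin n) (Fin n) ℂ) - Y) *ᵥ v)).re) := by
      simpa using hYI.re_dotProduct_nonneg v
    rw [Matrix.sub_mulVec, Matrix.one_mulVec, dotProduct_sub, Complex.sub_re] at h0
    have heig : ν i = (star v ⬝ᵥ (Y *ᵥ v)).re := by simpa using hYH.eigenvalues_eq i
    linarith
  set c : Fin n → ℝ := fun i => (ν i) ^ (q - 1) with hc
  have hc0 : ∀ i, 0 ≤ c i := fun i => Real.rpow_nonneg (hν0 i) _
  have hc1 : ∀ i, c i ≤ 1 := fun i => Real.rpow_le_one (hν0 i) (hν1 i) (by linarith)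
  have hZeq : matFun f Y = VY * Matrix.diagonal (fun i => (c i : ℂ)) * star VY := by
    simp only [matFun, dif_pos hYH]
    rfl
  have hZH : (matFun f Y).IsHermitian := by
    rw [hZeq]; exact TsallisAux.conj_diag_herm VY c
  have hZgram : (matFun f Y)ᴴ * (matFun f Y)
      = VY * Matrix.diagonal (fun i => ((c i * c i : ℝ) : ℂ)) * star VY := by
    rw [show (matFun f Y)ᴴ = matFun f Y from hZH, hZeq,
      TsallisAux.conj_diag_mul VY hsVV]
    have hfun : (fun i => (c i : ℂ) * (c i : ℂ)) = (fun i => ((c i * c i : ℝ) : ℂ)) := by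
      funext i; push_cast; ring
    rw [hfun]
  have hZc : ∀ x, ‖TsallisAux.ee ((matFun f Y) *ᵥ x)‖ ≤ ‖TsallisAux.ee x‖ :=
    fun x => TsallisAux.contr_of_gram _ VY hVYU (fun i => c i * c i)
      (fun i => mul_nonneg (hc0 i) (hc0 i))
      (fun i => by nlinarith [hc0 i, hc1 i]) hZgram x
  have hkey := TsallisAux.key X (matFun f Y) hX hZH hZc
  have hTr : X.trace.re = 1 / (d:ℝ)^2 := by
    rw [hTrX, show (1/(d:ℂ)^2) = (((1/(d:ℝ)^2 : ℝ)) : ℂ) by push_cast; ring,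
      Complex.ofReal_re]
  rw [hTr] at hkey
  have hd2 : (2:ℝ) ≤ (d:ℝ) := by exact_mod_cast hd
  have hdpos : (0:ℝ) < (d:ℝ) := by linarith
  have hq1 : (1:ℝ) ≤ q - 1 := by linarith
  have cpos : 0 < q / (q - 1) := by apply div_pos <;> linarith
  have hB : (d:ℝ) ^ (1 - q) ≤ 1 :=
    Real.rpow_le_one_of_one_le_of_nonpos (by linarith) (by linarith)
  have hCge : 2 ≤ (d:ℝ) ^ (q - 1) := by
    calc (2:ℝ) ≤ (d:ℝ) := hd2
    _ = (d:ℝ) ^ (1:ℝ) := (Real.rpow_one _).symm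
    _ ≤ (d:ℝ) ^ (q - 1) := Real.rpow_le_rpow_of_exponent_le (by linarith) hq1
  have hsplit : (d:ℝ) ^ (q + 1) = (d:ℝ) ^ (q - 1) * (d:ℝ)^2 := by
    rw [show ((d:ℝ)^2 : ℝ) = (d:ℝ)^((2:ℕ):ℝ) by rw [Real.rpow_natCast],
      ← Real.rpow_add hdpos]
    congr 1
    push_cast
    ring
  have hTnonneg : 0 ≤ q / (q-1) * (d:ℝ)^(q+1) := by positivity
  calc (q/(q-1)) * (d:ℝ)^(q+1) * traceNorm (X * matFun f Y - matFun f Y * X)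
      ≤ (q/(q-1)) * (d:ℝ)^(q+1) * (2 * (1/(d:ℝ)^2)) := by
        exact mul_le_mul_of_nonneg_left hkey hTnonneg
    _ = (q/(q-1)) * (2 * (d:ℝ)^(q-1)) := by
        rw [hsplit]
        have : ((d:ℝ)^2 : ℝ) ≠ 0 := by positivity
        field_simp
    _ ≤ 9 * (q/(q-1)) * ((d:ℝ)^(q-1) - (d:ℝ)^(1-q)) := by
        have h5 : 2 * (d:ℝ)^(q-1) ≤ 9 * ((d:ℝ)^(q-1) - (d:ℝ)^(1-q)) := by linarith
        calc (q/(q-1)) * (2*(d:ℝ)^(q-1))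
            ≤ (q/(q-1)) * (9 * ((d:ℝ)^(q-1) - (d:ℝ)^(1-q))) :=
              mul_le_mul_of_nonneg_left h5 cpos.le
          _ = 9 * (q/(q-1)) * ((d:ℝ)^(q-1) - (d:ℝ)^(1-q)) := by ring
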